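/- Let $N \geq 2$, $k \geq 1$, $p = N^{-1/k}$, $P_\ell = p^{k-\ell}$. For $1 \leq n \leq N$, the quantity $E[M_n] = nP_0 + \sum_{\ell=1}^k n(P_\ell - P_{\ell-1})(1-P_{\ell-1})^{n-1}$ (expected number of winners in the implicit empty block scheme) satisfies $E[M_n] = O(N^{1/k})$; more precisely there is an absolute function $C(p)$ with $E[M_n] \leq \frac{n}{N} + \frac{1}{p(1-p)}\sum_{\ell=1}^k n P_\ell (1-P_{\ell-1})^n$ and the latter sum is $O(N^{1/k})$. -/

import Mathlib

private lemma aux_nx (x : ℝ) (hx0 : 0 ≤ x) (hx1 : x ≤ 1) (n : ℕ) :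
    (n : ℝ) * x * (1 - x) ^ n ≤ 1 := by
  have h1 : 1 + (n : ℝ) * x ≤ (1 + x) ^ n := one_add_mul_le_pow (by linarith) n
  have h3 : (0 : ℝ) ≤ (1 - x) ^ n := pow_nonneg (by linarith) n
  have h2 : (1 - x) ^ n * (1 + x) ^ n ≤ 1 := by
    rw [← mul_pow]
    exact pow_le_one₀ (by nlinarith) (by nlinarith)
  nlinarith [mul_le_mul_of_nonneg_right h1 h3]

set_option maxHeartbeats 800000 in
/-- Scalability of the implicit empty block scheme: with `p = N^{-1/k}` and
`P_ℓ = p^{k-ℓ}`, the expected number of winners satisfies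
`E[M_n] ≤ n/N + (1/(p(1-p))) ∑_{ℓ=1}^k n P_ℓ (1-P_{ℓ-1})^n`, and the latter
sum is `O(N^{1/k})`. -/
theorem stmt12 (k : ℕ) (hk : 1 ≤ k) :
    ∃ C : ℝ, ∀ N : ℕ, 2 ≤ N →
      ∀ p : ℝ, p = (N : ℝ) ^ (-(1 : ℝ) / (k : ℝ)) →
      ∀ P : ℕ → ℝ, (∀ ℓ, P ℓ = p ^ (k - ℓ)) →
      ∀ n : ℕ, 1 ≤ n → n ≤ N →
        ((n : ℝ) * P 0 + ∑ ℓ ∈ Finset.Icc 1 k,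
            (n : ℝ) * (P ℓ - P (ℓ - 1)) * (1 - P (ℓ - 1)) ^ (n - 1)
          ≤ (n : ℝ) / N + (1 / (p * (1 - p))) *
              ∑ ℓ ∈ Finset.Icc 1 k, (n : ℝ) * P ℓ * (1 - P (ℓ - 1)) ^ n) ∧
        ∑ ℓ ∈ Finset.Icc 1 k, (n : ℝ) * P ℓ * (1 - P (ℓ - 1)) ^ n
          ≤ C * (N : ℝ) ^ ((1 : ℝ) / (k : ℝ)) := by
  refine ⟨k, ?_⟩
  intro N hN p hp P hP n hn hnN
  have hkR : (0 : ℝ) < k := by exact_mod_cast hk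
  have hN1 : (1 : ℝ) < N := by exact_mod_cast (by omega : 1 < N)
  have hN0 : (0 : ℝ) < N := by linarith
  have hp0 : 0 < p := by rw [hp]; exact Real.rpow_pos_of_pos hN0 _
  have hp1 : p < 1 := by
    rw [hp]
    apply Real.rpow_lt_one_of_one_lt_of_neg hN1
    rw [neg_div]
    exact neg_neg_iff_pos.mpr (div_pos one_pos hkR) |>.le.lt_of_ne (by
      exact ne_of_lt (neg_neg_iff_pos.mpr (div_pos one_pos hkR)))
  have hpk : p ^ k = (N : ℝ)⁻¹ := by
    rw [hp, ← Real.rpow_natCast ((N : ℝ) ^ (-(1 : ℝ) / k)) k,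
      ← Real.rpow_mul hN0.le]
    rw [show (-(1 : ℝ) / k) * k = -1 by field_simp]
    exact Real.rpow_neg_one N
  have hmul : (N : ℝ) ^ ((1 : ℝ) / k) * p = 1 := by
    rw [hp, ← Real.rpow_add hN0, show (1 : ℝ) / k + -1 / k = 0 by ring,
      Real.rpow_zero]
  have hip : p⁻¹ = (N : ℝ) ^ ((1 : ℝ) / k) := inv_eq_of_mul_eq_one_left hmul
  -- per-index facts
  have key : ∀ ℓ ∈ Finset.Icc 1 k, P (ℓ - 1) = p * P ℓ ∧ 0 < P ℓ ∧ P ℓ ≤ 1 := by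
    intro ℓ hl
    rw [Finset.mem_Icc] at hl
    refine ⟨?_, ?_, ?_⟩
    · rw [hP, hP, show k - (ℓ - 1) = (k - ℓ) + 1 by omega, pow_succ]
      ring
    · rw [hP]; exact pow_pos hp0 _
    · rw [hP]; exact pow_le_one₀ hp0.le hp1.le
  constructor
  · have hP0 : (n : ℝ) * P 0 = n / N := by
      rw [hP 0, Nat.sub_zero, hpk, div_eq_mul_inv]
    rw [hP0, Finset.mul_sum]
    apply add_le_add_right
    apply Finset.sum_le_sum
    intro ℓ hl
    obtain ⟨hsub, hq0, hq1⟩ := key ℓ hl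
    rw [hsub]
    set q := P ℓ
    have ha : 1 - p ≤ 1 - p * q := by nlinarith
    have hpw : (0 : ℝ) ≤ (1 - p * q) ^ (n - 1) := pow_nonneg (by nlinarith) _
    have hpow : (1 - p * q) ^ n = (1 - p * q) ^ (n - 1) * (1 - p * q) := by
      rw [← pow_succ, show n - 1 + 1 = n by omega]
    rw [hpow, one_div, inv_mul_eq_div, le_div_iff₀ (by nlinarith : 0 < p * (1 - p))]
    have hB : (0 : ℝ) ≤ (n : ℝ) * q * (1 - p * q) ^ (n - 1) := by positivity
    have h1 : (1 - p) * p ≤ 1 := by nlinarith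
    have h2 : p * q ≤ p := by nlinarith
    have hkey : (1 - p) * (p * (1 - p)) ≤ 1 - p * q := by
      nlinarith [mul_nonneg (sub_nonneg.mpr hp1.le) (sub_nonneg.mpr h1)]
    nlinarith [mul_le_mul_of_nonneg_left hkey hB]
  · calc ∑ ℓ ∈ Finset.Icc 1 k, (n : ℝ) * P ℓ * (1 - P (ℓ - 1)) ^ n
        ≤ ∑ ℓ ∈ Finset.Icc 1 k, p⁻¹ := by
          apply Finset.sum_le_sum
          intro ℓ hl
          obtain ⟨hsub, hq0, hq1⟩ := key ℓ hl
          rw [hsub]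
          set q := P ℓ
          have hx0 : (0 : ℝ) ≤ p * q := by positivity
          have hx1 : p * q ≤ 1 := mul_le_one₀ hp1.le hq0.le hq1
          have h := aux_nx (p * q) hx0 hx1 n
          rw [inv_eq_one_div, le_div_iff₀ hp0]
          exact le_trans (le_of_eq (by ring)) h
      _ = (k : ℝ) * p⁻¹ := by
          rw [Finset.sum_const, Nat.card_Icc]
          simp [nsmul_eq_mul]
      _ = (k : ℝ) * (N : ℝ) ^ ((1 : ℝ) / k) := by rw [hip]
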